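/- Security subspace for the (3,5) CQ protocol, players {1,3,4}: let h be the graph on four qubits labelled (D,1,3,4) with edges {D,1}, {D,3}, {D,4}, {3,4}, with stabilizers k_i (no square vertices). Let W := span{|h_{(0,0,0,0)}⟩, |h_{(0,0,1,1)}⟩, |h_{(1,1,1,0)}⟩, |h_{(1,1,0,1)}⟩} (labels ordered (ℓ_D,ℓ_1,ℓ_3,ℓ_4)). Then (i) W = {ψ ∈ H_4 : (k_D∘k_1) ψ = ψ and (k_1∘k_3∘k_4) ψ = ψ}; and (ii) for every finite-dimensional complex inner-product space H_E and every unit vector Ψ ∈ H_E ⊗ H_4 lying in H_E ⊗ W, Tr_{{1,3,4}}(|Ψ⟩⟨Ψ|) = ρ_E ⊗ (Id_2/2), where ρ_E := Tr_{{D,1,3,4}}(|Ψ⟩⟨Ψ|); hence the environment carries no information about the dealer's qubit. -/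

import Mathlib

noncomputable section

open scoped ComplexConjugate

/-- The Hilbert space of qubits indexed by `V`, as functions from bit strings to `ℂ`. -/
abbrev QState (V : Type) : Type := (V → Fin 2) → ℂ

/-- The diagonal operator with diagonal entries `d`. -/
def diagOp {V : Type} (d : (V → Fin 2) → ℂ) : QState V →ₗ[ℂ] QState V where
  toFun f := fun x => d x * f x
  map_add' f g := by funext x; simp [mul_add]
  map_smul' c f := by funext x; simp [smul_eq_mul]; ring

/-- The Pauli `Z` operator on qubit `i`. -/
def Zop {V : Type} (i : V) : QState V →ₗ[ℂ] QState V :=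
  diagOp fun x => (-1 : ℂ) ^ (x i : ℕ)

/-- The Pauli `X` operator on qubit `i` (bit flip). -/
def Xop {V : Type} [DecidableEq V] (i : V) : QState V →ₗ[ℂ] QState V where
  toFun f := fun x => f (Function.update x i (x i + 1))
  map_add' f g := rfl
  map_smul' c f := rfl

/-- The phase gate `S` on qubit `i`, sending `|x⟩` to `(-i)^(x i) |x⟩`. -/
def Sop {V : Type} (i : V) : QState V →ₗ[ℂ] QState V :=
  diagOp fun x => (-Complex.I) ^ (x i : ℕ)

/-- The Pauli `Y` operator on qubit `i`, `Y = i·X·Z`. -/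
def Yop {V : Type} [DecidableEq V] (i : V) : QState V →ₗ[ℂ] QState V :=
  Complex.I • (Xop i ∘ₗ Zop i)

/-- `qVal G x` is the number of edges of `G` both of whose endpoints carry bit 1 in `x`. -/
def qVal {V : Type} (G : SimpleGraph V) (x : V → Fin 2) : ℕ :=
  Nat.card {e : Sym2 V // e ∈ G.edgeSet ∧ ∀ v ∈ e, x v = 1}

/-- The graph state `|G⟩`, with amplitudes `2^{-n/2} (-1)^{q_G(x)}`. -/
def graphState {V : Type} [Fintype V] (G : SimpleGraph V) : QState V :=
  fun x => (((Real.sqrt 2)⁻¹ ^ Fintype.card V : ℝ) : ℂ) * (-1 : ℂ) ^ qVal G x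

/-- The labeled/encoded graph state `|𝒢_ℓ⟩ = (∏_i Z_i^{ℓ_i}) (∏_{j ∈ Vsq} S_j) |G⟩`,
with square-vertex set `Vsq`. -/
def encSq {V : Type} [Fintype V] (G : SimpleGraph V) (Vsq : Set V) (ℓ : V → Fin 2) : QState V :=
  fun x => (-1 : ℂ) ^ Nat.card {i : V // ℓ i = 1 ∧ x i = 1}
    * (-Complex.I) ^ Nat.card {j : V // j ∈ Vsq ∧ x j = 1}
    * graphState G x

/-- The encoded graph state `|G_ℓ⟩` (no square vertices). -/
def encG {V : Type} [Fintype V] (G : SimpleGraph V) (ℓ : V → Fin 2) : QState V :=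
  encSq G ∅ ℓ

open Classical in
/-- The stabilizer operator of vertex `i`: `X_i ∏_{j ∈ N_i} Z_j` for circular vertices,
`Y_i ∏_{j ∈ N_i} Z_j` for square vertices (`i ∈ Vsq`). -/
def Kop {V : Type} [DecidableEq V] (G : SimpleGraph V) (Vsq : Set V) (i : V) :
    QState V →ₗ[ℂ] QState V :=
  (if i ∈ Vsq then Yop i else Xop i) ∘ₗ
    diagOp fun x => (-1 : ℂ) ^ Nat.card {j : V // G.Adj i j ∧ x j = 1}

/-- Merge a bit string on `P` with a bit string on the complement of `P`. -/
def mergeBits {V : Type} [DecidableEq V] (P : Finset V) (a : {i // i ∈ P} → Fin 2)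
    (c : {i // i ∉ P} → Fin 2) : V → Fin 2 :=
  fun i => if h : i ∈ P then a ⟨i, h⟩ else c ⟨i, h⟩

/-- The reduced density matrix of the pure state `ψ` on the qubits in `P`:
`(a, b) ↦ ∑_c ⟨a⊔c|ψ⟩⟨ψ|b⊔c⟩`. -/
def red {V : Type} [Fintype V] [DecidableEq V] (P : Finset V) (ψ : QState V) :
    ({i // i ∈ P} → Fin 2) → ({i // i ∈ P} → Fin 2) → ℂ :=
  fun a b => ∑ c : {i // i ∉ P} → Fin 2, ψ (mergeBits P a c) * conj (ψ (mergeBits P b c))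

/-- The computational basis vector `|y⟩`. -/
def basisVec {V : Type} [Fintype V] [DecidableEq V] (y : V → Fin 2) : QState V :=
  fun x => if x = y then 1 else 0

/-- The matrix entry `⟨x|A|y⟩` of an operator. -/
def opEntry {V : Type} [Fintype V] [DecidableEq V] (A : QState V →ₗ[ℂ] QState V)
    (x y : V → Fin 2) : ℂ := A (basisVec y) x

/-- `A` acts trivially outside `P`: it equals `M ⊗ Id` for some operator `M` on the
qubits in `P`. -/
def trivialOutside {V : Type} [Fintype V] [DecidableEq V] (P : Finset V)
    (A : QState V →ₗ[ℂ] QState V) : Prop :=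
  ∃ M : ({i // i ∈ P} → Fin 2) → ({i // i ∈ P} → Fin 2) → ℂ,
    ∀ a b c c', opEntry A (mergeBits P a c) (mergeBits P b c') = if c = c' then M a b else 0

/-- The product `∏_{i ∈ T} K_i` of (commuting) operators, taken in sorted order. -/
def prodOps {V : Type} [LinearOrder V] (T : Finset V)
    (K : V → QState V →ₗ[ℂ] QState V) : QState V →ₗ[ℂ] QState V :=
  (T.sort (· ≤ ·)).foldr (fun i acc => K i ∘ₗ acc) LinearMap.id


/-- The rank-one operator `|u⟩⟨v|` (conjugate-linear in `v`). -/
def outer {E : Type} [NormedAddCommGroup E] [InnerProductSpace ℂ E] (u v : E) : E →ₗ[ℂ] E where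
  toFun w := (inner ℂ v w : ℂ) • u
  map_add' w w' := by simp [inner_add_right, add_smul]
  map_smul' c w := by simp [inner_smul_right, smul_smul]

/-- The graph on the four qubits (D,1,3,4) = (0,1,2,3) with edges
{D,1}, {D,3}, {D,4}, {3,4}. -/
def hGraph134 : SimpleGraph (Fin 4) :=
  SimpleGraph.fromRel fun a b =>
    (a = 0 ∧ (b = 1 ∨ b = 2 ∨ b = 3)) ∨ (a = 2 ∧ b = 3)

/-- The security subspace `W`, spanned by the four encoded graph states with labels
(0,0,0,0), (0,0,1,1), (1,1,1,0), (1,1,0,1) in the order (ℓ_D, ℓ_1, ℓ_3, ℓ_4). -/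
def W134 : Submodule ℂ (QState (Fin 4)) :=
  Submodule.span ℂ
    {encG hGraph134 ![0, 0, 0, 0], encG hGraph134 ![0, 0, 1, 1],
     encG hGraph134 ![1, 1, 1, 0], encG hGraph134 ![1, 1, 0, 1]}

-- AUX START
namespace Sec35

instance : DecidableRel hGraph134.Adj :=
  fun a b => decidable_of_iff' _ (SimpleGraph.fromRel_adj _ a b)

/-- flip bit `i` -/
def u (i : Fin 4) (x : Fin 4 → Fin 2) : Fin 4 → Fin 2 := Function.update x i (x i + 1)

/-- explicit neighbour-count parity exponents -/
def mE (i : Fin 4) (y : Fin 4 → Fin 2) : ℕ :=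
  ![(y 1 : ℕ) + y 2 + y 3, (y 0 : ℕ), (y 0 : ℕ) + y 3, (y 0 : ℕ) + y 2] i

lemma mcard (i : Fin 4) (y : Fin 4 → Fin 2) :
    Nat.card {j : Fin 4 // hGraph134.Adj i j ∧ y j = 1} = mE i y := by
  rw [Nat.card_eq_fintype_card]; revert i y; decide

lemma Kop_apply (i : Fin 4) (ψ : QState (Fin 4)) (x : Fin 4 → Fin 2) :
    Kop hGraph134 ∅ i ψ x = (-1 : ℂ) ^ mE i (u i x) * ψ (u i x) := by
  rw [← mcard]; simp [Kop, Xop, diagOp, u]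

def qp (x : Fin 4 → Fin 2) : ℕ :=
  (x 0 : ℕ) * x 1 + (x 0 : ℕ) * x 2 + (x 0 : ℕ) * x 3 + (x 2 : ℕ) * x 3

lemma qVal_eq (x : Fin 4 → Fin 2) : qVal hGraph134 x = qp x := by
  rw [qVal, Nat.card_eq_fintype_card]; revert x; decide

def dotl (ℓ x : Fin 4 → Fin 2) : ℕ :=
  (ℓ 0 : ℕ) * (x 0 : ℕ) + (ℓ 1 : ℕ) * (x 1 : ℕ) + (ℓ 2 : ℕ) * (x 2 : ℕ) + (ℓ 3 : ℕ) * (x 3 : ℕ)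

def sg (ℓ x : Fin 4 → Fin 2) : ℤ := (-1) ^ (dotl ℓ x + qp x)

lemma dot_card (ℓ x : Fin 4 → Fin 2) :
    Nat.card {i : Fin 4 // ℓ i = 1 ∧ x i = 1} = dotl ℓ x := by
  rw [Nat.card_eq_fintype_card]; revert ℓ x; decide

lemma enc_eq (ℓ x : Fin 4 → Fin 2) :
    encG hGraph134 ℓ x = (1 / 4 : ℂ) * ((sg ℓ x : ℤ) : ℂ) := by
  have h0 : Nat.card {j : Fin 4 // j ∈ (∅ : Set (Fin 4)) ∧ x j = 1} = 0 := by
    have : IsEmpty {j : Fin 4 // j ∈ (∅ : Set (Fin 4)) ∧ x j = 1} := ⟨fun j => j.2.1⟩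
    exact Nat.card_of_isEmpty
  have h4 : ((Real.sqrt 2)⁻¹ ^ Fintype.card (Fin 4) : ℝ) = 1 / 4 := by
    rw [Fintype.card_fin, inv_pow, show (4:ℕ) = 2 * 2 from rfl, pow_mul,
      Real.sq_sqrt (by norm_num : (0:ℝ) ≤ 2)]
    norm_num
  rw [encG, encSq, graphState, h0, dot_card, qVal_eq, h4]
  rw [sg]
  push_cast
  rw [pow_add]
  ring
/-- the four labels -/
def Lb : Fin 4 → Fin 4 → Fin 2 := ![![0,0,0,0], ![0,0,1,1], ![1,1,1,0], ![1,1,0,1]]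

def v (j : Fin 4) : QState (Fin 4) := encG hGraph134 (Lb j)

lemma W_eq : W134 = Submodule.span ℂ (Set.range v) := by
  unfold W134
  congr 1
  ext ψ
  constructor
  · rintro (rfl | rfl | rfl | rfl)
    · exact ⟨0, by rw [v, show Lb 0 = ![0,0,0,0] from by decide]⟩
    · exact ⟨1, by rw [v, show Lb 1 = ![0,0,1,1] from by decide]⟩
    · exact ⟨2, by rw [v, show Lb 2 = ![1,1,1,0] from by decide]⟩
    · exact ⟨3, by rw [v, show Lb 3 = ![1,1,0,1] from by decide]⟩
  · rintro ⟨j, rfl⟩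
    fin_cases j
    · left; show encG _ _ = _; congr 1
    · right; left; show encG _ _ = _; congr 1
    · right; right; left; show encG _ _ = _; congr 1
    · right; right; right
      exact Set.mem_singleton_iff.mpr (by show encG _ _ = _; congr 1)

lemma Aval (ψ : QState (Fin 4)) (x : Fin 4 → Fin 2) :
    (Kop hGraph134 ∅ 0 ∘ₗ Kop hGraph134 ∅ 1) ψ x =
      (-1 : ℂ) ^ mE 0 (u 0 x) * ((-1 : ℂ) ^ mE 1 (u 1 (u 0 x)) * ψ (u 1 (u 0 x))) := by
  rw [LinearMap.comp_apply, Kop_apply, Kop_apply]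

lemma Bval (ψ : QState (Fin 4)) (x : Fin 4 → Fin 2) :
    (Kop hGraph134 ∅ 1 ∘ₗ Kop hGraph134 ∅ 2 ∘ₗ Kop hGraph134 ∅ 3) ψ x =
      (-1 : ℂ) ^ mE 1 (u 1 x) * ((-1 : ℂ) ^ mE 2 (u 2 (u 1 x)) *
        ((-1 : ℂ) ^ mE 3 (u 3 (u 2 (u 1 x))) * ψ (u 3 (u 2 (u 1 x))))) := by
  rw [LinearMap.comp_apply, LinearMap.comp_apply, Kop_apply, Kop_apply, Kop_apply]

lemma A_fix (j : Fin 4) : (Kop hGraph134 ∅ 0 ∘ₗ Kop hGraph134 ∅ 1) (v j) = v j := by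
  have key : ∀ (j : Fin 4) (x : Fin 4 → Fin 2),
      (-1 : ℤ) ^ mE 0 (u 0 x) * ((-1 : ℤ) ^ mE 1 (u 1 (u 0 x)) * sg (Lb j) (u 1 (u 0 x)))
        = sg (Lb j) x := by decide
  funext x
  rw [Aval, v, enc_eq, enc_eq, ← key j x]
  push_cast
  ring

lemma B_fix (j : Fin 4) :
    (Kop hGraph134 ∅ 1 ∘ₗ Kop hGraph134 ∅ 2 ∘ₗ Kop hGraph134 ∅ 3) (v j) = v j := by
  have key : ∀ (j : Fin 4) (x : Fin 4 → Fin 2),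
      (-1 : ℤ) ^ mE 1 (u 1 x) * ((-1 : ℤ) ^ mE 2 (u 2 (u 1 x)) *
        ((-1 : ℤ) ^ mE 3 (u 3 (u 2 (u 1 x))) * sg (Lb j) (u 3 (u 2 (u 1 x)))))
        = sg (Lb j) x := by decide
  funext x
  rw [Bval, v, enc_eq, enc_eq, ← key j x]
  push_cast
  ring
lemma vanish (ψ : QState (Fin 4))
    (hA : (Kop hGraph134 ∅ 0 ∘ₗ Kop hGraph134 ∅ 1) ψ = ψ)
    (hB : (Kop hGraph134 ∅ 1 ∘ₗ Kop hGraph134 ∅ 2 ∘ₗ Kop hGraph134 ∅ 3) ψ = ψ)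
    (h0 : ψ ![0,0,0,0] = 0) (h1 : ψ ![0,0,1,0] = 0)
    (h2 : ψ ![0,0,0,1] = 0) (h3 : ψ ![0,0,1,1] = 0) : ψ = 0 := by
  have pA : ∀ x, ψ x = (-1 : ℂ) ^ mE 0 (u 0 x) * ((-1 : ℂ) ^ mE 1 (u 1 (u 0 x)) *
      ψ (u 1 (u 0 x))) := fun x => by rw [← congrFun hA x, Aval]
  have pB : ∀ x, ψ x = (-1 : ℂ) ^ mE 1 (u 1 x) * ((-1 : ℂ) ^ mE 2 (u 2 (u 1 x)) *
      ((-1 : ℂ) ^ mE 3 (u 3 (u 2 (u 1 x))) * ψ (u 3 (u 2 (u 1 x))))) :=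
    fun x => by rw [← congrFun hB x, Bval]
  -- step A : flip bits 0,1
  have stepA : ∀ x y, u 1 (u 0 x) = y → ψ y = 0 → ψ x = 0 := by
    intro x y hxy hy
    rw [pA x, hxy, hy, mul_zero, mul_zero]
  have stepB : ∀ x y, u 3 (u 2 (u 1 x)) = y → ψ y = 0 → ψ x = 0 := by
    intro x y hxy hy
    rw [pB x, hxy, hy, mul_zero, mul_zero, mul_zero]
  -- B-images of the four reps
  have z0111 : ψ ![0,1,1,1] = 0 := stepB _ _ (by decide) h0
  have z0101 : ψ ![0,1,0,1] = 0 := stepB _ _ (by decide) h1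
  have z0110 : ψ ![0,1,1,0] = 0 := stepB _ _ (by decide) h2
  have z0100 : ψ ![0,1,0,0] = 0 := stepB _ _ (by decide) h3
  -- A-images of the four reps
  have z1100 : ψ ![1,1,0,0] = 0 := stepA _ _ (by decide) h0
  have z1110 : ψ ![1,1,1,0] = 0 := stepA _ _ (by decide) h1
  have z1101 : ψ ![1,1,0,1] = 0 := stepA _ _ (by decide) h2
  have z1111 : ψ ![1,1,1,1] = 0 := stepA _ _ (by decide) h3
  -- A-images of the B-images
  have z1011 : ψ ![1,0,1,1] = 0 := stepA _ _ (by decide) z0111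
  have z1001 : ψ ![1,0,0,1] = 0 := stepA _ _ (by decide) z0101
  have z1010 : ψ ![1,0,1,0] = 0 := stepA _ _ (by decide) z0110
  have z1000 : ψ ![1,0,0,0] = 0 := stepA _ _ (by decide) z0100
  have all : ∀ a b c d : Fin 2, ψ ![a,b,c,d] = 0 := by
    intro a b c d
    fin_cases a <;> fin_cases b <;> fin_cases c <;> fin_cases d <;> assumption
  funext x
  have hx : x = ![x 0, x 1, x 2, x 3] := funext fun i => by fin_cases i <;> rfl
  have := all (x 0) (x 1) (x 2) (x 3)
  rw [← hx] at this
  exact this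
lemma part1 (ψ : QState (Fin 4)) : ψ ∈ W134 ↔
    ((Kop hGraph134 ∅ 0 ∘ₗ Kop hGraph134 ∅ 1) ψ = ψ ∧
      (Kop hGraph134 ∅ 1 ∘ₗ Kop hGraph134 ∅ 2 ∘ₗ Kop hGraph134 ∅ 3) ψ = ψ) := by
  constructor
  · intro h
    rw [W_eq] at h
    have hle : Submodule.span ℂ (Set.range v) ≤
        (LinearMap.eqLocus (Kop hGraph134 ∅ 0 ∘ₗ Kop hGraph134 ∅ 1) LinearMap.id) ⊓
        (LinearMap.eqLocus (Kop hGraph134 ∅ 1 ∘ₗ Kop hGraph134 ∅ 2 ∘ₗ Kop hGraph134 ∅ 3)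
          LinearMap.id) := by
      rw [Submodule.span_le]
      rintro _ ⟨j, rfl⟩
      exact ⟨A_fix j, B_fix j⟩
    exact hle h
  · rintro ⟨hA, hB⟩
    -- coefficients
    set p0 := ψ ![0,0,0,0] with hp0
    set p1 := ψ ![0,0,1,0] with hp1
    set p2 := ψ ![0,0,0,1] with hp2
    set p3 := ψ ![0,0,1,1] with hp3
    set c : Fin 4 → ℂ := ![p0 + p1 + p2 - p3, p0 - p1 - p2 - p3,
      p0 - p1 + p2 + p3, p0 + p1 - p2 + p3] with hc
    have hcombo : (∑ j : Fin 4, c j • v j) ∈ W134 := by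
      rw [W_eq]
      exact Submodule.sum_mem _ fun j _ =>
        Submodule.smul_mem _ _ (Submodule.subset_span ⟨j, rfl⟩)
    have heval : ∀ y : Fin 4 → Fin 2, (ψ - ∑ j : Fin 4, c j • v j) y =
        ψ y - (c 0 * ((1/4 : ℂ) * ((sg (Lb 0) y : ℤ) : ℂ)) +
          c 1 * ((1/4 : ℂ) * ((sg (Lb 1) y : ℤ) : ℂ)) +
          c 2 * ((1/4 : ℂ) * ((sg (Lb 2) y : ℤ) : ℂ)) +
          c 3 * ((1/4 : ℂ) * ((sg (Lb 3) y : ℤ) : ℂ))) := by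
      intro y
      simp only [Pi.sub_apply, Finset.sum_apply, Pi.add_apply, Pi.smul_apply, smul_eq_mul,
        Fin.sum_univ_four, v, enc_eq]
    have hδ : ψ - ∑ j : Fin 4, c j • v j = 0 := by
      apply vanish
      · rw [map_sub, hA, map_sum]
        congr 1
        refine Finset.sum_congr rfl fun j _ => ?_
        rw [map_smul, A_fix]
      · rw [map_sub, hB, map_sum]
        congr 1
        refine Finset.sum_congr rfl fun j _ => ?_
        rw [map_smul, B_fix]
      · rw [heval]
        simp only [hc, show (sg (Lb 0) ![0,0,0,0]) = 1 from by decide,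
          show (sg (Lb 1) ![0,0,0,0]) = 1 from by decide,
          show (sg (Lb 2) ![0,0,0,0]) = 1 from by decide,
          show (sg (Lb 3) ![0,0,0,0]) = 1 from by decide,
          Matrix.cons_val_zero, Matrix.cons_val_one, Matrix.head_cons,
          Matrix.cons_val_two, Matrix.cons_val_three, Matrix.tail_cons]
        push_cast
        ring
      · rw [heval]
        simp only [hc, show (sg (Lb 0) ![0,0,1,0]) = 1 from by decide,
          show (sg (Lb 1) ![0,0,1,0]) = -1 from by decide,
          show (sg (Lb 2) ![0,0,1,0]) = -1 from by decide,
          show (sg (Lb 3) ![0,0,1,0]) = 1 from by decide,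
          Matrix.cons_val_zero, Matrix.cons_val_one, Matrix.head_cons,
          Matrix.cons_val_two, Matrix.cons_val_three, Matrix.tail_cons]
        push_cast
        ring
      · rw [heval]
        simp only [hc, show (sg (Lb 0) ![0,0,0,1]) = 1 from by decide,
          show (sg (Lb 1) ![0,0,0,1]) = -1 from by decide,
          show (sg (Lb 2) ![0,0,0,1]) = 1 from by decide,
          show (sg (Lb 3) ![0,0,0,1]) = -1 from by decide,
          Matrix.cons_val_zero, Matrix.cons_val_one, Matrix.head_cons,
          Matrix.cons_val_two, Matrix.cons_val_three, Matrix.tail_cons]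
        push_cast
        ring
      · rw [heval]
        simp only [hc, show (sg (Lb 0) ![0,0,1,1]) = -1 from by decide,
          show (sg (Lb 1) ![0,0,1,1]) = -1 from by decide,
          show (sg (Lb 2) ![0,0,1,1]) = 1 from by decide,
          show (sg (Lb 3) ![0,0,1,1]) = 1 from by decide,
          Matrix.cons_val_zero, Matrix.cons_val_one, Matrix.head_cons,
          Matrix.cons_val_two, Matrix.cons_val_three, Matrix.tail_cons]
        push_cast
        ring
    have := sub_eq_zero.mp hδ
    rw [this]
    exact hcombo
section OuterLemmas
variable {E : Type} [NormedAddCommGroup E] [InnerProductSpace ℂ E]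

lemma outer_apply (u v w : E) : outer u v w = (inner ℂ v w : ℂ) • u := rfl

lemma outer_sum_left {ι : Type*} (s : Finset ι) (f : ι → E) (w : E) :
    outer (∑ j ∈ s, f j) w = ∑ j ∈ s, outer (f j) w :=
  LinearMap.ext fun z => by
    simp [outer_apply, LinearMap.sum_apply, Finset.smul_sum]

lemma outer_smul_left (a : ℂ) (u w : E) : outer (a • u) w = a • outer u w :=
  LinearMap.ext fun z => by
    show (inner ℂ w z : ℂ) • (a • u) = a • ((inner ℂ w z : ℂ) • u)
    rw [smul_comm]

lemma outer_sum_right {ι : Type*} (s : Finset ι) (u : E) (g : ι → E) :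
    outer u (∑ k ∈ s, g k) = ∑ k ∈ s, outer u (g k) :=
  LinearMap.ext fun z => by
    simp [outer_apply, sum_inner, LinearMap.sum_apply, Finset.sum_smul]

lemma outer_smul_right (a : ℂ) (u w : E) : outer u (a • w) = (conj a) • outer u w :=
  LinearMap.ext fun z => by
    simp [outer_apply, inner_smul_left, smul_smul, mul_comm]

lemma sep (a b : E) (h : ∀ φ : E →ₗ[ℂ] ℂ, φ a = φ b) : a = b := by
  have := h (innerSL ℂ (a - b)).toLinearMap
  simp only [ContinuousLinearMap.coe_coe, innerSL_apply_apply] at this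
  have h2 : (inner ℂ (a - b) (a - b) : ℂ) = 0 := by
    rw [inner_sub_right, this, sub_self]
  rwa [inner_self_eq_zero, sub_eq_zero] at h2

lemma collect {ι : Type*} [Fintype ι] (t : ι → Fin 4 → Fin 4 → ℂ)
    (O : Fin 4 → Fin 4 → (E →ₗ[ℂ] E)) :
    ∑ c : ι, ∑ j : Fin 4, ∑ k : Fin 4, t c j k • O j k =
      ∑ j : Fin 4, ∑ k : Fin 4, (∑ c : ι, t c j k) • O j k := by
  rw [Finset.sum_comm]
  refine Finset.sum_congr rfl fun j _ => ?_
  rw [Finset.sum_comm]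
  refine Finset.sum_congr rfl fun k _ => ?_
  rw [Finset.sum_smul]

end OuterLemmas
/-- bits quadruples ≃ bit strings -/
def bitsEquiv : (Fin 2 × Fin 2 × Fin 2 × Fin 2) ≃ (Fin 4 → Fin 2) where
  toFun p := ![p.1, p.2.1, p.2.2.1, p.2.2.2]
  invFun x := (x 0, x 1, x 2, x 3)
  left_inv := by decide
  right_inv := by decide

lemma sum_bits {M : Type*} [AddCommMonoid M] (f : (Fin 4 → Fin 2) → M) :
    ∑ x : Fin 4 → Fin 2, f x =
      ∑ a : Fin 2, ∑ b : Fin 2, ∑ c : Fin 2, ∑ d : Fin 2, f ![a,b,c,d] := by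
  rw [← Equiv.sum_comp bitsEquiv f, Fintype.sum_prod_type]
  refine Finset.sum_congr rfl fun a _ => ?_
  rw [Fintype.sum_prod_type]
  refine Finset.sum_congr rfl fun b _ => ?_
  rw [Fintype.sum_prod_type]
  rfl

/-- bits triples ≃ bit strings on non-dealer coordinates -/
def cEquiv : (Fin 2 × Fin 2 × Fin 2) ≃ ({i : Fin 4 // i ≠ 0} → Fin 2) where
  toFun p := fun i => ![0, p.1, p.2.1, p.2.2] i.1
  invFun c := (c ⟨1, by decide⟩, c ⟨2, by decide⟩, c ⟨3, by decide⟩)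
  left_inv := by decide
  right_inv := by decide

lemma sum_cbits {M : Type*} [AddCommMonoid M] (f : ({i : Fin 4 // i ≠ 0} → Fin 2) → M) :
    ∑ c : {i : Fin 4 // i ≠ 0} → Fin 2, f c =
      ∑ a : Fin 2, ∑ b : Fin 2, ∑ d : Fin 2, f (cEquiv (a, b, d)) := by
  rw [← Equiv.sum_comp cEquiv f, Fintype.sum_prod_type]
  refine Finset.sum_congr rfl fun a _ => ?_
  rw [Fintype.sum_prod_type]

lemma ins_eq : ∀ d a b c : Fin 2,
    (fun k : Fin 4 => if h : k = 0 then d else cEquiv (a, b, c) ⟨k, h⟩) = ![d, a, b, c] := by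
  decide

lemma conj_v (k : Fin 4) (y : Fin 4 → Fin 2) : conj (v k y) = v k y := by
  rw [v, enc_eq, map_mul, map_intCast, map_div₀, map_one, map_ofNat]

lemma orth (j k : Fin 4) :
    (∑ x : Fin 4 → Fin 2, v j x * v k x) = if j = k then 1 else 0 := by
  have key : ∀ j k : Fin 4,
      (∑ a : Fin 2, ∑ b : Fin 2, ∑ c : Fin 2, ∑ d : Fin 2,
        sg (Lb j) ![a,b,c,d] * sg (Lb k) ![a,b,c,d]) = if j = k then 16 else 0 := by decide
  rw [sum_bits]
  simp only [v, enc_eq]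
  have step : ∀ a b c d : Fin 2,
      ((1/4 : ℂ) * ((sg (Lb j) ![a,b,c,d] : ℤ) : ℂ)) *
        ((1/4 : ℂ) * ((sg (Lb k) ![a,b,c,d] : ℤ) : ℂ)) =
      (1/16 : ℂ) * (((sg (Lb j) ![a,b,c,d] * sg (Lb k) ![a,b,c,d] : ℤ) : ℂ)) := by
    intros; push_cast; ring
  simp only [step, ← Finset.mul_sum]
  rw [show (∑ a : Fin 2, ∑ b : Fin 2, ∑ c : Fin 2, ∑ d : Fin 2,
      (((sg (Lb j) ![a,b,c,d] * sg (Lb k) ![a,b,c,d] : ℤ) : ℂ))) =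
      (((∑ a : Fin 2, ∑ b : Fin 2, ∑ c : Fin 2, ∑ d : Fin 2,
        sg (Lb j) ![a,b,c,d] * sg (Lb k) ![a,b,c,d] : ℤ) : ℂ)) from by push_cast; rfl]
  rw [key j k]
  split_ifs <;> norm_num
lemma Sval (d d' : Fin 2) (j k : Fin 4) :
    (∑ c : {i : Fin 4 // i ≠ 0} → Fin 2,
        v j (fun m : Fin 4 => if h : m = 0 then d else c ⟨m, h⟩) *
        v k (fun m : Fin 4 => if h : m = 0 then d' else c ⟨m, h⟩)) =
      if d = d' ∧ j = k then (1/2 : ℂ) else 0 := by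
  have key : ∀ (d d' : Fin 2) (j k : Fin 4),
      (∑ a : Fin 2, ∑ b : Fin 2, ∑ e : Fin 2,
        sg (Lb j) ![d,a,b,e] * sg (Lb k) ![d',a,b,e]) =
      if d = d' ∧ j = k then 8 else 0 := by decide
  rw [sum_cbits]
  simp only [ins_eq, v, enc_eq]
  have step : ∀ a b e : Fin 2,
      ((1/4 : ℂ) * ((sg (Lb j) ![d,a,b,e] : ℤ) : ℂ)) *
        ((1/4 : ℂ) * ((sg (Lb k) ![d',a,b,e] : ℤ) : ℂ)) =
      (1/16 : ℂ) * (((sg (Lb j) ![d,a,b,e] * sg (Lb k) ![d',a,b,e] : ℤ) : ℂ)) := by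
    intros; push_cast; ring
  simp only [step, ← Finset.mul_sum]
  rw [show (∑ a : Fin 2, ∑ b : Fin 2, ∑ e : Fin 2,
      (((sg (Lb j) ![d,a,b,e] * sg (Lb k) ![d',a,b,e] : ℤ) : ℂ))) =
      (((∑ a : Fin 2, ∑ b : Fin 2, ∑ e : Fin 2,
        sg (Lb j) ![d,a,b,e] * sg (Lb k) ![d',a,b,e] : ℤ) : ℂ)) from by push_cast; rfl]
  rw [key d d' j k]
  split_ifs <;> norm_num
lemma part2 {E : Type} [NormedAddCommGroup E] [InnerProductSpace ℂ E]
    [FiniteDimensional ℂ E] (Ψ : (Fin 4 → Fin 2) → E)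
    (hW : ∀ φ : E →ₗ[ℂ] ℂ, (fun x => φ (Ψ x)) ∈ W134) (d d' : Fin 2) :
    (∑ c : {i : Fin 4 // i ≠ 0} → Fin 2,
        outer (Ψ fun k => if h : k = 0 then d else c ⟨k, h⟩)
              (Ψ fun k => if h : k = 0 then d' else c ⟨k, h⟩)) =
      (if d = d' then (1 / 2 : ℂ) else 0) •
        ∑ x : Fin 4 → Fin 2, outer (Ψ x) (Ψ x) := by
  set e : Fin 4 → E := fun j => ∑ x : Fin 4 → Fin 2, v j x • Ψ x with he
  have hrep : ∀ y, Ψ y = ∑ j : Fin 4, v j y • e j := by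
    intro y
    apply sep
    intro φ
    have hmem : (fun x => φ (Ψ x)) ∈ Submodule.span ℂ (Set.range v) := by
      rw [← W_eq]; exact hW φ
    obtain ⟨c, hc⟩ := (Submodule.mem_span_range_iff_exists_fun ℂ).mp hmem
    have hval : ∀ x, φ (Ψ x) = ∑ j : Fin 4, c j * v j x := by
      intro x
      have := congrFun hc x
      simpa [Finset.sum_apply, Pi.smul_apply, smul_eq_mul] using this.symm
    have hek : ∀ k, φ (e k) = c k := by
      intro k
      rw [he]
      simp only []
      rw [map_sum]
      simp only [map_smul, smul_eq_mul]
      calc ∑ x : Fin 4 → Fin 2, v k x * φ (Ψ x)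
          = ∑ x : Fin 4 → Fin 2, ∑ j : Fin 4, c j * (v k x * v j x) := by
            refine Finset.sum_congr rfl fun x _ => ?_
            rw [hval x, Finset.mul_sum]
            exact Finset.sum_congr rfl fun j _ => by ring
        _ = ∑ j : Fin 4, c j * ∑ x : Fin 4 → Fin 2, v k x * v j x := by
            rw [Finset.sum_comm]
            exact Finset.sum_congr rfl fun j _ => by rw [Finset.mul_sum]
        _ = ∑ j : Fin 4, c j * (if k = j then 1 else 0) := by
            simp only [orth]
        _ = c k := by simp
    rw [hval y, map_sum]
    simp only [map_smul, smul_eq_mul]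
    exact Finset.sum_congr rfl fun j _ => by rw [hek]; ring
  have hexp : ∀ y z, outer (Ψ y) (Ψ z) =
      ∑ j : Fin 4, ∑ k : Fin 4, (v j y * v k z) • outer (e j) (e k) := by
    intro y z
    rw [hrep y, hrep z, outer_sum_left]
    refine Finset.sum_congr rfl fun j _ => ?_
    rw [outer_smul_left, outer_sum_right, Finset.smul_sum]
    refine Finset.sum_congr rfl fun k _ => ?_
    rw [outer_smul_right, conj_v, smul_smul]
  have hR : (∑ x : Fin 4 → Fin 2, outer (Ψ x) (Ψ x)) =
      ∑ j : Fin 4, ∑ k : Fin 4, (if j = k then (1:ℂ) else 0) • outer (e j) (e k) := by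
    rw [show (∑ x : Fin 4 → Fin 2, outer (Ψ x) (Ψ x)) =
        ∑ x : Fin 4 → Fin 2, ∑ j : Fin 4, ∑ k : Fin 4,
          (v j x * v k x) • outer (e j) (e k) from Finset.sum_congr rfl fun x _ => hexp x x,
      collect]
    simp only [orth]
  have hL : (∑ c : {i : Fin 4 // i ≠ 0} → Fin 2,
      outer (Ψ fun k => if h : k = 0 then d else c ⟨k, h⟩)
            (Ψ fun k => if h : k = 0 then d' else c ⟨k, h⟩)) =
      ∑ j : Fin 4, ∑ k : Fin 4, (if d = d' ∧ j = k then (1/2 : ℂ) else 0) •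
        outer (e j) (e k) := by
    rw [show (∑ c : {i : Fin 4 // i ≠ 0} → Fin 2,
        outer (Ψ fun k => if h : k = 0 then d else c ⟨k, h⟩)
              (Ψ fun k => if h : k = 0 then d' else c ⟨k, h⟩)) =
        ∑ c : {i : Fin 4 // i ≠ 0} → Fin 2, ∑ j : Fin 4, ∑ k : Fin 4,
          (v j (fun m => if h : m = 0 then d else c ⟨m, h⟩) *
           v k (fun m => if h : m = 0 then d' else c ⟨m, h⟩)) • outer (e j) (e k) from
        Finset.sum_congr rfl fun c _ => hexp _ _,
      collect]
    simp only [Sval]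
  rw [hL, hR]
  by_cases hdd : d = d'
  · simp only [hdd, if_pos rfl, true_and]
    rw [Finset.smul_sum]
    refine Finset.sum_congr rfl fun j _ => ?_
    rw [Finset.smul_sum]
    refine Finset.sum_congr rfl fun k _ => ?_
    by_cases hjk : j = k <;> simp [hjk]
  · simp [hdd]
end Sec35

/-- security subspace for the (3,5) CQ protocol, players {1,3,4}:
(i) `W` is exactly the common `+1`-eigenspace of `k_D∘k₁` and `k₁∘k₃∘k₄`;
(ii) every unit vector `Ψ ∈ H_E ⊗ W` (represented by its `E`-valued components;
membership in `H_E ⊗ W` expressed via functionals on `E`) has reduced state on `E` and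
the dealer qubit equal to `ρ_E ⊗ (Id₂/2)`, stated blockwise in the dealer indices;
hence the environment carries no information about the dealer's qubit. -/
theorem security_subspace_35_players134 :
    (∀ ψ : QState (Fin 4), ψ ∈ W134 ↔
      ((Kop hGraph134 ∅ 0 ∘ₗ Kop hGraph134 ∅ 1) ψ = ψ ∧
        (Kop hGraph134 ∅ 1 ∘ₗ Kop hGraph134 ∅ 2 ∘ₗ Kop hGraph134 ∅ 3) ψ = ψ)) ∧
    (∀ (E : Type) [NormedAddCommGroup E] [InnerProductSpace ℂ E]
        [FiniteDimensional ℂ E] (Ψ : (Fin 4 → Fin 2) → E),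
      (∀ φ : E →ₗ[ℂ] ℂ, (fun x => φ (Ψ x)) ∈ W134) →
      (∑ x : Fin 4 → Fin 2, ‖Ψ x‖ ^ 2) = 1 →
      ∀ d d' : Fin 2,
        (∑ c : {i : Fin 4 // i ≠ 0} → Fin 2,
            outer (Ψ fun k => if h : k = 0 then d else c ⟨k, h⟩)
                  (Ψ fun k => if h : k = 0 then d' else c ⟨k, h⟩)) =
          (if d = d' then (1 / 2 : ℂ) else 0) •
            ∑ x : Fin 4 → Fin 2, outer (Ψ x) (Ψ x)) := by
  constructor
  · exact Sec35.part1
  · intro E _ _ _ Ψ hW _ d d'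
    exact Sec35.part2 Ψ hW d d'

end
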